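/- arXiv:2603.11400 — 3 statements merged into one kernel-verified Lean document; each statement's English description precedes it below -/
import Mathlib

section
/- Let X_1, …, X_{M+1} be exchangeable real-valued random variables (in particular, this holds when they are i.i.d.). Fix δ ∈ (0,1) and set k = ⌈(M+1)(1−δ)⌉, and assume k ≤ M. Let γ be the k-th smallest value among X_1, …, X_M (the empirical k/M-quantile of the first M variables). Then P(X_{M+1} ≤ γ) ≥ 1 − δ. -/
open MeasureTheory ENNReal

/-- The `k`-th smallest value among `v 0, …, v (M-1)` (1-indexed). -/
noncomputable def kthSmallest {M : ℕ} (v : Fin M → ℝ) (k : ℕ) : ℝ :=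
  ((Multiset.sort (↑(List.ofFn v) : Multiset ℝ) (· ≤ ·)).getD (k - 1) 0)


lemma CI {M : ℕ} (v : Fin M → ℝ) (p : ℝ → Prop) [DecidablePred p] :
    Multiset.countP p (↑(List.ofFn v) : Multiset ℝ) = (Finset.univ.filter fun i => p (v i)).card := by
  have : (↑(List.ofFn v) : Multiset ℝ) = Multiset.map v Finset.univ.val := by
    simp [List.ofFn_eq_map, Fin.univ_def]
  rw [this, Multiset.countP_map]; rfl

lemma lenSort {M : ℕ} (v : Fin M → ℝ) :
    (Multiset.sort (↑(List.ofFn v) : Multiset ℝ) (· ≤ ·)).length = M := by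
  rw [Multiset.length_sort]; simp

lemma CARD {M : ℕ} (v : Fin M → ℝ) (p : ℝ → Prop) [DecidablePred p] :
    (Finset.univ.filter fun j : Fin (Multiset.sort (↑(List.ofFn v) : Multiset ℝ) (· ≤ ·)).length =>
      p ((Multiset.sort (↑(List.ofFn v) : Multiset ℝ) (· ≤ ·)).get j)).card
      = (Finset.univ.filter fun i : Fin M => p (v i)).card := by
  set l := Multiset.sort (↑(List.ofFn v) : Multiset ℝ) (· ≤ ·) with hl
  have h1 := CI l.get p
  rw [List.ofFn_get] at h1
  have h2 : (↑l : Multiset ℝ) = (↑(List.ofFn v) : Multiset ℝ) := Multiset.sort_eq _ _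
  rw [h2, CI] at h1
  exact h1.symm
lemma CL1 (l : List ℝ) (hl : l.Pairwise (· ≤ ·)) (p : ℝ → Prop) [DecidablePred p]
    (hp : ∀ a b : ℝ, a ≤ b → p b → p a) {i : ℕ} (hi : i < l.length)
    (h : ¬ p (l.get ⟨i, hi⟩)) :
    (Finset.univ.filter fun j : Fin l.length => p (l.get j)).card ≤ i := by
  classical
  have hsub : ∀ j ∈ (Finset.univ.filter fun j : Fin l.length => p (l.get j)), (j : ℕ) ∈ Finset.range i := by
    intro j hj
    simp only [Finset.mem_filter] at hj
    simp only [Finset.mem_range]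
    by_contra hc
    push_neg at hc
    exact h (hp _ _ (hl.rel_get_of_le (by exact Fin.mk_le_of_le_val hc)) hj.2)
  calc (Finset.univ.filter fun j : Fin l.length => p (l.get j)).card
      ≤ (Finset.range i).card := Finset.card_le_card_of_injOn (fun j => (j : ℕ)) hsub
        (fun a _ b _ hab => Fin.val_injective hab)
    _ = i := Finset.card_range i

lemma CL2 (l : List ℝ) (hl : l.Pairwise (· ≤ ·)) (p : ℝ → Prop) [DecidablePred p]
    (hp : ∀ a b : ℝ, a ≤ b → p b → p a) {i : ℕ} (hi : i < l.length)
    (h : p (l.get ⟨i, hi⟩)) :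
    i + 1 ≤ (Finset.univ.filter fun j : Fin l.length => p (l.get j)).card := by
  classical
  have key : (Finset.range (i+1)).card ≤ (Finset.univ.filter fun j : Fin l.length => p (l.get j)).card := by
    apply Finset.card_le_card_of_injOn
      (fun n => if hn : n < l.length then (⟨n, hn⟩ : Fin l.length) else ⟨i, hi⟩)
    · intro n hn
      simp only [Finset.mem_coe, Finset.mem_range, Nat.lt_succ_iff] at hn
      have hlt : n < l.length := lt_of_le_of_lt hn hi
      simp only [dif_pos hlt, Finset.mem_coe, Finset.mem_filter, Finset.mem_univ, true_and]
      exact hp _ _ (hl.rel_get_of_le (by exact hn)) h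
    · intro a ha b hb hab
      have ha2 : a ≤ i := Nat.lt_succ_iff.mp (by simpa using ha)
      have hb2 : b ≤ i := Nat.lt_succ_iff.mp (by simpa using hb)
      have ha' : a < l.length := lt_of_le_of_lt ha2 hi
      have hb' : b < l.length := lt_of_le_of_lt hb2 hi
      simp only [dif_pos ha', dif_pos hb'] at hab
      simpa using congrArg Fin.val hab
  simpa using key

lemma lemA {M : ℕ} (v : Fin M → ℝ) {k : ℕ} (hk1 : 1 ≤ k) (hkM : k ≤ M) (x : ℝ)
    (h : (Finset.univ.filter fun i => v i < x).card < k) : x ≤ kthSmallest v k := by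
  classical
  set l := Multiset.sort (↑(List.ofFn v) : Multiset ℝ) (· ≤ ·) with hldef
  have hlen : l.length = M := lenSort v
  have hi : k - 1 < l.length := by omega
  have hx : x ≤ l.get ⟨k - 1, hi⟩ := by
    by_contra hc
    push_neg at hc
    have := CL2 l (Multiset.pairwise_sort _ _) (fun a => a < x)
      (fun a b hab hb => lt_of_le_of_lt hab hb) hi hc
    rw [CARD v (fun a => a < x)] at this
    omega
  have : kthSmallest v k = l.get ⟨k - 1, hi⟩ := by
    rw [kthSmallest, ← hldef, List.getD_eq_getElem l 0 hi]
    simp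
  rw [this]; exact hx

lemma lemB {n : ℕ} (w : Fin n → ℝ) {k : ℕ} (hk1 : 1 ≤ k) (hkn : k ≤ n) :
    (Finset.univ.filter fun j : Fin n =>
      k ≤ (Finset.univ.filter fun i => i ≠ j ∧ w i < w j).card).card ≤ n - k := by
  classical
  set l := Multiset.sort (↑(List.ofFn w) : Multiset ℝ) (· ≤ ·) with hldef
  have hlen : l.length = n := lenSort w
  have hi : k - 1 < l.length := by omega
  set s := l.get ⟨k - 1, hi⟩ with hs
  set C := Finset.univ.filter fun i : Fin n => w i ≤ s with hC
  have hCcard : k ≤ C.card := by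
    have := CL2 l (Multiset.pairwise_sort _ _) (fun a => a ≤ s)
      (fun a b hab hb => le_trans hab hb) hi le_rfl
    rw [CARD w (fun a => a ≤ s)] at this
    rw [hC]
    omega
  set B := Finset.univ.filter fun j : Fin n =>
      k ≤ (Finset.univ.filter fun i => i ≠ j ∧ w i < w j).card with hB
  have hBC : B ⊆ Finset.univ \ C := by
    intro j hj
    simp only [hB, Finset.mem_filter, Finset.mem_univ, true_and] at hj
    simp only [Finset.mem_sdiff, Finset.mem_univ, true_and]
    intro hjC
    rw [hC, Finset.mem_filter] at hjC
    have hc : w j ≤ s := hjC.2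
    have hns : ¬ (l.get ⟨k - 1, hi⟩ < w j) := not_lt.mpr hc
    have h1 := CL1 l (Multiset.pairwise_sort _ _) (fun a => a < w j)
      (fun a b hab hb => lt_of_le_of_lt hab hb) hi hns
    rw [CARD w (fun a => a < w j)] at h1
    have h2 : (Finset.univ.filter fun i => i ≠ j ∧ w i < w j).card
        ≤ (Finset.univ.filter fun i : Fin n => w i < w j).card :=
      Finset.card_le_card (by
        intro i hi
        simp only [Finset.mem_filter] at hi ⊢
        exact ⟨hi.1, hi.2.2⟩)
    omega
  calc B.card ≤ (Finset.univ \ C).card := Finset.card_le_card hBC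
    _ = n - C.card := by rw [Finset.card_sdiff_of_subset (Finset.subset_univ C)]; simp
    _ ≤ n - k := Nat.sub_le_sub_left hCcard n

-- measurability of the rank set
lemma measSset {M k : ℕ} (j : Fin (M+1)) :
    MeasurableSet {f : Fin (M+1) → ℝ |
      k ≤ (Finset.univ.filter fun i => i ≠ j ∧ f i < f j).card} := by
  classical
  have heq : {f : Fin (M+1) → ℝ | k ≤ (Finset.univ.filter fun i => i ≠ j ∧ f i < f j).card}
      = ⋃ (T : Finset (Fin (M+1))) (_ : T.card = k ∧ j ∉ T), ⋂ i ∈ T, {f | f i < f j} := by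
    ext f
    simp only [Set.mem_setOf_eq, Set.mem_iUnion, Set.mem_iInter]
    constructor
    · intro h
      obtain ⟨T, hTsub, hTcard⟩ := Finset.exists_subset_card_eq h
      refine ⟨T, ⟨hTcard, fun hj => ?_⟩, fun i hi => ?_⟩
      · exact ((Finset.mem_filter.mp (hTsub hj)).2).1 rfl
      · exact ((Finset.mem_filter.mp (hTsub hi)).2).2
    · rintro ⟨T, ⟨hTcard, hjT⟩, hT⟩
      have : T ⊆ Finset.univ.filter fun i => i ≠ j ∧ f i < f j := by
        intro i hi
        exact Finset.mem_filter.mpr ⟨Finset.mem_univ _,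
          fun h => hjT (h ▸ hi), hT i hi⟩
      calc k = T.card := hTcard.symm
        _ ≤ _ := Finset.card_le_card this
  rw [heq]
  refine MeasurableSet.iUnion fun T => MeasurableSet.iUnion fun _ => ?_
  exact MeasurableSet.biInter (Set.to_countable _)
    (fun i _ => measurableSet_lt (measurable_pi_apply i) (measurable_pi_apply j))

lemma cardLast {M : ℕ} (p : Fin (M+1) → Prop) [DecidablePred p] :
    (Finset.univ.filter fun i : Fin (M+1) => i ≠ Fin.last M ∧ p i).card
      = (Finset.univ.filter fun i : Fin M => p i.castSucc).card := by
  classical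
  refine (Finset.card_bij (fun (i : Fin M) _ => i.castSucc) ?_ ?_ ?_).symm
  · intro a ha
    refine Finset.mem_filter.mpr ⟨Finset.mem_univ _, (Fin.castSucc_lt_last a).ne, ?_⟩
    exact (Finset.mem_filter.mp ha).2
  · intro a _ b _ hab
    exact Fin.castSucc_injective _ hab
  · intro b hb
    obtain ⟨hb1, hb2⟩ := Finset.mem_filter.mp hb
    obtain ⟨y, hy⟩ := Fin.exists_castSucc_eq.mpr hb2.1
    exact ⟨y, Finset.mem_filter.mpr ⟨Finset.mem_univ _, hy ▸ hb2.2⟩, hy⟩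

-- card of swapped filter
lemma cardSwap {M : ℕ} (w : Fin (M+1) → ℝ) (j : Fin (M+1)) :
    (Finset.univ.filter fun i => i ≠ Fin.last M ∧
        w (Equiv.swap j (Fin.last M) i) < w (Equiv.swap j (Fin.last M) (Fin.last M))).card
      = (Finset.univ.filter fun i => i ≠ j ∧ w i < w j).card := by
  classical
  set σ := Equiv.swap j (Fin.last M)
  have hσl : σ (Fin.last M) = j := Equiv.swap_apply_right _ _
  refine Finset.card_bij (fun i _ => σ i) ?_ ?_ ?_
  · intro a ha
    obtain ⟨_, ha2⟩ := Finset.mem_filter.mp ha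
    refine Finset.mem_filter.mpr ⟨Finset.mem_univ _, ?_, hσl ▸ ha2.2⟩
    intro h
    exact ha2.1 (σ.injective (h.trans hσl.symm))
  · intro a _ b _ hab
    exact σ.injective hab
  · intro b hb
    obtain ⟨_, hb2⟩ := Finset.mem_filter.mp hb
    refine ⟨σ.symm b, Finset.mem_filter.mpr ⟨Finset.mem_univ _, ?_, ?_⟩, σ.apply_symm_apply b⟩
    · intro h
      apply hb2.1
      rw [← σ.apply_symm_apply b, h, hσl]
    · rw [σ.apply_symm_apply, hσl]
      exact hb2.2


/-- Split conformal prediction coverage guarantee: for exchangeable real random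
variables `X_1, …, X_{M+1}`, with `k = ⌈(M+1)(1-δ)⌉ ≤ M` and `γ` the `k`-th smallest
of the first `M` values, we have `P(X_{M+1} ≤ γ) ≥ 1 - δ`. -/
theorem stmt_1 {Ω : Type*} [MeasurableSpace Ω] (P : Measure Ω) [IsProbabilityMeasure P]
    (M : ℕ) (X : Fin (M + 1) → Ω → ℝ) (hmeas : ∀ i, Measurable (X i))
    (hexch : ∀ σ : Equiv.Perm (Fin (M + 1)),
      Measure.map (fun ω => fun i => X (σ i) ω) P = Measure.map (fun ω => fun i => X i ω) P)
    (δ : ℝ) (hδ : δ ∈ Set.Ioo (0 : ℝ) 1)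
    (k : ℕ) (hk : k = ⌈((M : ℝ) + 1) * (1 - δ)⌉₊) (hkM : k ≤ M) :
    ENNReal.ofReal (1 - δ) ≤
      P {ω | X (Fin.last M) ω ≤ kthSmallest (fun i : Fin M => X i.castSucc ω) k} := by
  classical
  obtain ⟨hδ0, hδ1⟩ := hδ
  have hδpos : (0:ℝ) < 1 - δ := by linarith
  have hk1 : 1 ≤ k := by
    rw [hk]
    exact Nat.one_le_iff_ne_zero.mpr (Nat.ceil_pos.mpr (by positivity)).ne'
  -- the random vector
  set Y : Ω → (Fin (M+1) → ℝ) := fun ω i => X i ω with hY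
  have hYmeas : Measurable Y := measurable_pi_lambda _ hmeas
  -- the bad events
  set S : Fin (M+1) → Set (Fin (M+1) → ℝ) := fun j =>
    {f | k ≤ (Finset.univ.filter fun i => i ≠ j ∧ f i < f j).card} with hS
  have hSmeas : ∀ j, MeasurableSet (S j) := fun j => measSset j
  set A : Fin (M+1) → Set Ω := fun j => Y ⁻¹' (S j) with hA
  have hAmeas : ∀ j, MeasurableSet (A j) := fun j => hYmeas (hSmeas j)
  -- equal probabilities by exchangeability
  have hAeq : ∀ j, P (A j) = P (A (Fin.last M)) := by
    intro j
    set σ := Equiv.swap j (Fin.last M) with hσ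
    have hmeas' : Measurable (fun ω => fun i => X (σ i) ω) :=
      measurable_pi_lambda _ (fun i => hmeas (σ i))
    have h1 := congrArg (fun μ : Measure (Fin (M+1) → ℝ) => μ (S (Fin.last M))) (hexch σ)
    rw [Measure.map_apply hmeas' (hSmeas _), Measure.map_apply hYmeas (hSmeas _)] at h1
    have h2 : (fun ω => fun i => X (σ i) ω) ⁻¹' (S (Fin.last M)) = A j := by
      ext ω
      simp only [Set.mem_preimage, hA, hS, Set.mem_setOf_eq]
      rw [cardSwap (fun i => X i ω) j]
    rw [h2] at h1
    exact h1
  -- sum bound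
  have hsum : ∑ j : Fin (M+1), P (A j) ≤ ((M + 1 - k : ℕ) : ℝ≥0∞) := by
    have h1 : ∀ j, P (A j) = ∫⁻ ω, (A j).indicator (1 : Ω → ℝ≥0∞) ω ∂P := by
      intro j
      rw [lintegral_indicator_one (hAmeas j)]
    calc ∑ j : Fin (M+1), P (A j)
        = ∫⁻ ω, ∑ j : Fin (M+1), (A j).indicator (1 : Ω → ℝ≥0∞) ω ∂P := by
          rw [lintegral_finset_sum]
          · exact Finset.sum_congr rfl fun j _ => h1 j
          · exact fun j _ => (measurable_const.indicator (hAmeas j))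
      _ ≤ ∫⁻ _, ((M + 1 - k : ℕ) : ℝ≥0∞) ∂P := by
          apply lintegral_mono
          intro ω
          dsimp only
          have hcount : ∑ j : Fin (M+1), (A j).indicator (1 : Ω → ℝ≥0∞) ω
              = ((Finset.univ.filter fun j : Fin (M+1) => ω ∈ A j).card : ℝ≥0∞) := by
            rw [Finset.card_filter]
            push_cast
            refine Finset.sum_congr rfl fun j _ => ?_
            by_cases h : ω ∈ A j <;> simp [h, Set.indicator]
          rw [hcount]
          have hB := lemB (fun i => X i ω) hk1 (le_trans hkM (Nat.le_succ M))
          have heq2 : (Finset.univ.filter fun j : Fin (M+1) => ω ∈ A j)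
              = Finset.univ.filter fun j : Fin (M+1) =>
                  k ≤ (Finset.univ.filter fun i => i ≠ j ∧ X i ω < X j ω).card := by
            apply Finset.filter_congr
            intro j _
            simp only [hA, hS, hY, Set.mem_preimage, Set.mem_setOf_eq]
          rw [heq2]
          exact_mod_cast Nat.cast_le.mpr hB
      _ = ((M + 1 - k : ℕ) : ℝ≥0∞) := by
          rw [lintegral_const, measure_univ, mul_one]
  -- hence (M+1) * P(A last) ≤ M+1-k
  have hmul : ((M+1 : ℕ) : ℝ≥0∞) * P (A (Fin.last M)) ≤ ((M + 1 - k : ℕ) : ℝ≥0∞) := by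
    calc ((M+1 : ℕ) : ℝ≥0∞) * P (A (Fin.last M))
        = ∑ _j : Fin (M+1), P (A (Fin.last M)) := by
          rw [Finset.sum_const, Finset.card_univ, Fintype.card_fin, nsmul_eq_mul]
      _ = ∑ j : Fin (M+1), P (A j) := (Finset.sum_congr rfl fun j _ => (hAeq j).symm)
      _ ≤ _ := hsum
  -- key inequality : P(A last) + ofReal (1-δ) ≤ 1
  have hkey : P (A (Fin.last M)) + ENNReal.ofReal (1 - δ) ≤ 1 := by
    have hMk : ENNReal.ofReal (((M:ℝ) + 1) * (1 - δ)) ≤ ((k : ℕ) : ℝ≥0∞) := by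
      rw [← ENNReal.ofReal_natCast k]
      apply ENNReal.ofReal_le_ofReal
      rw [hk]
      exact Nat.le_ceil _
    have hmul2 : ((M+1 : ℕ) : ℝ≥0∞) * ENNReal.ofReal (1 - δ)
        = ENNReal.ofReal (((M:ℝ) + 1) * (1 - δ)) := by
      rw [ENNReal.ofReal_mul (by positivity), ← ENNReal.ofReal_natCast (M+1)]
      push_cast
      ring_nf
    have hcancel : ((M+1 : ℕ) : ℝ≥0∞) * (P (A (Fin.last M)) + ENNReal.ofReal (1 - δ))
        ≤ ((M+1 : ℕ) : ℝ≥0∞) * 1 := by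
      rw [mul_add, hmul2, mul_one]
      calc ((M+1 : ℕ) : ℝ≥0∞) * P (A (Fin.last M)) + ENNReal.ofReal (((M:ℝ) + 1) * (1 - δ))
          ≤ ((M + 1 - k : ℕ) : ℝ≥0∞) + ((k : ℕ) : ℝ≥0∞) := add_le_add hmul hMk
        _ = ((M + 1 : ℕ) : ℝ≥0∞) := by
            rw [← Nat.cast_add, Nat.sub_add_cancel (le_trans hkM (Nat.le_succ M))]
    have hne0 : ((M+1 : ℕ) : ℝ≥0∞) ≠ 0 := by exact_mod_cast Nat.succ_ne_zero M
    have hnetop : ((M+1 : ℕ) : ℝ≥0∞) ≠ ⊤ := ENNReal.natCast_ne_top _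
    exact (ENNReal.mul_le_mul_iff_right hne0 hnetop).mp hcancel
  -- complement is inside the target event
  have hsub : (A (Fin.last M))ᶜ ⊆
      {ω | X (Fin.last M) ω ≤ kthSmallest (fun i : Fin M => X i.castSucc ω) k} := by
    intro ω hω
    simp only [hA, hS, Set.mem_compl_iff, Set.mem_preimage, Set.mem_setOf_eq, not_le] at hω
    rw [cardLast (fun i => X i ω < X (Fin.last M) ω)] at hω
    exact lemA _ hk1 hkM _ hω
  calc ENNReal.ofReal (1 - δ)
      ≤ 1 - P (A (Fin.last M)) := by
        exact ENNReal.le_sub_of_add_le_left (measure_ne_top P _) hkey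
    _ = P ((A (Fin.last M))ᶜ) := (prob_compl_eq_one_sub (hAmeas _)).symm
    _ ≤ _ := measure_mono hsub
end

section
/- Let D be a finite dataset of demonstrations, each demonstration ξ a finite list of state-action pairs, all of length H. Let ℓ(s,a;θ) be twice continuously differentiable in θ, define the behavior-cloning loss L_bc(θ) = (1/(|D|·H)) ∑_{ξ∈D} ∑_{(s,a)∈ξ} ℓ(s,a;θ), and suppose θ* is a critical point of L_bc with positive-definite Hessian H_bc. Let T be a finite set of rollout trajectories with return R : T → ℝ and rollout distribution p_θ(τ) = ∏_{(s',a')∈τ} π_θ(a'|s') · (θ-independent factors), differentiable in θ with p_{θ*}(τ) > 0. Define the performance J(θ) = ∑_τ p_θ(τ) R(τ), the performance influence Ψ_π(ξ) = −∇J(θ*)^⊤ H_bc^{−1} ∇_θ [ (1/H)∑_{(s,a)∈ξ} ℓ(s,a;θ*) ], and the action influence Ψ_a((s',a'),(s,a)) = −∇_θ log π_{θ*}(a'|s')^⊤ H_bc^{−1} ∇_θ ℓ(s,a;θ*). Then Ψ_π(ξ) = E_{τ ∼ p_{θ*}} [ (R(τ)/H) ∑_{(s',a')∈τ} ∑_{(s,a)∈ξ}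 Ψ_a((s',a'),(s,a)) ]. -/
open scoped RealInnerProductSpace

section Aux

variable {E : Type*} [NormedAddCommGroup E] [InnerProductSpace ℝ E] [CompleteSpace E]
variable {ι : Type*}

lemma cupid_inner_grad (f : E → ℝ) (x y : E) :
    ⟪gradient f x, y⟫ = fderiv ℝ f x y := by
  rw [gradient]
  exact InnerProductSpace.toDual_symm_apply

lemma cupid_listsum_fderiv {E' : Type*} [NormedAddCommGroup E'] [NormedSpace ℝ E']
    (f : ι → E' → ℝ) (x : E') (hd : ∀ i, DifferentiableAt ℝ (f i) x) :
    ∀ l : List ι, HasFDerivAt (fun θ => (l.map (fun i => f i θ)).sum)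
      ((l.map (fun i => fderiv ℝ (f i) x)).sum) x
  | [] => by simpa using hasFDerivAt_const (0 : ℝ) x
  | (a :: l) => by
      have h := ((hd a).hasFDerivAt.add (cupid_listsum_fderiv f x hd l))
      simp only [List.map_cons, List.sum_cons]
      exact h

@[simp] lemma cupid_clm_apply {E' : Type*} [NormedAddCommGroup E'] [NormedSpace ℝ E']
    {α : Type*} (A : α → E' →L[ℝ] ℝ) (v : E') :
    ∀ l : List α, ((l.map A).sum) v = (l.map (fun i => A i v)).sum
  | [] => by simp
  | (a :: l) => by
      simp [ContinuousLinearMap.add_apply, cupid_clm_apply A v l]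

lemma cupid_listprod_fderiv {E' : Type*} [NormedAddCommGroup E'] [NormedSpace ℝ E']
    (f : ι → E' → ℝ) (x : E') (hd : ∀ i, DifferentiableAt ℝ (f i) x)
    (hne : ∀ i, f i x ≠ 0) :
    ∀ l : List ι, HasFDerivAt (fun θ => (l.map (fun i => f i θ)).prod)
      ((l.map (fun i =>
        ((l.map (fun j => f j x)).prod * (f i x)⁻¹) • fderiv ℝ (f i) x)).sum) x
  | [] => by simpa using hasFDerivAt_const (1 : ℝ) x
  | (a :: l) => by
      have h : HasFDerivAt (fun θ => f a θ * (l.map (fun i => f i θ)).prod) _ x :=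
        ((hd a).hasFDerivAt.mul (cupid_listprod_fderiv f x hd hne l))
      have heq : (fun θ => f a θ * (l.map (fun i => f i θ)).prod)
          = fun θ => ((a :: l).map (fun i => f i θ)).prod := by
        funext θ; simp
      rw [heq] at h
      refine h.congr_fderiv (Eq.symm ?_)
      ext v
      simp only [List.map_cons, List.prod_cons, List.sum_cons, ContinuousLinearMap.add_apply,
        ContinuousLinearMap.smul_apply, smul_eq_mul, cupid_clm_apply]
      rw [← List.sum_map_mul_left, add_comm]
      congr 1
      · refine congrArg List.sum (List.map_congr_left ?_)
        intro i _
        have hfi := hne i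
        field_simp
      · have hfa := hne a
        field_simp

lemma cupid_inner_list (a : E) (B : E →L[ℝ] E) (g : ι → E) :
    ∀ l : List ι, (l.map (fun i => -⟪a, B (g i)⟫)).sum = -⟪a, B ((l.map g).sum)⟫
  | [] => by simp
  | (i :: l) => by
      simp [cupid_inner_list a B g l, inner_add_right, neg_add, add_comm]

end Aux

/-- CUPID's Proposition 3.1: the performance influence of a training demonstration `ξ`
(of length `H`, drawn from a dataset of `N` demonstrations, all of length `H`) on the
policy's expected return decomposes into the return-weighted sum, over rollout
trajectories and their transitions, of pairwise action influences between rollout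
transitions and demonstration transitions. -/
theorem stmt_7 {S A : Type} (d N H : ℕ) (hHpos : 0 < H) (hNpos : 0 < N)
    (demo : Fin N → List (S × A)) (hlen : ∀ j, (demo j).length = H)
    (j₀ : Fin N) (ξ : List (S × A)) (hξ : ξ = demo j₀)
    (ℓ : S → A → EuclideanSpace ℝ (Fin d) → ℝ) (hℓ : ∀ s a, ContDiff ℝ 2 (ℓ s a))
    (θs : EuclideanSpace ℝ (Fin d))
    (Lbc : EuclideanSpace ℝ (Fin d) → ℝ)
    (hLbc : Lbc = fun θ =>
      (1 / ((N : ℝ) * (H : ℝ))) * ∑ j, ((demo j).map (fun pr => ℓ pr.1 pr.2 θ)).sum)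
    (hcrit : gradient Lbc θs = 0)
    (Hbc Hinv : EuclideanSpace ℝ (Fin d) →L[ℝ] EuclideanSpace ℝ (Fin d))
    (hHbc : Hbc = fderiv ℝ (gradient Lbc) θs)
    (hpd : ∀ v, v ≠ 0 → 0 < ⟪v, Hbc v⟫)
    (hinv1 : Hinv.comp Hbc = ContinuousLinearMap.id ℝ (EuclideanSpace ℝ (Fin d)))
    (hinv2 : Hbc.comp Hinv = ContinuousLinearMap.id ℝ (EuclideanSpace ℝ (Fin d)))
    {T : Type} [Fintype T] (R : T → ℝ) (sa : T → List (S × A))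
    (π : EuclideanSpace ℝ (Fin d) → S → A → ℝ)
    (hπpos : ∀ s a, 0 < π θs s a)
    (hπdiff : ∀ s a, Differentiable ℝ (fun θ => π θ s a))
    (c : T → ℝ)
    (p : EuclideanSpace ℝ (Fin d) → T → ℝ)
    (hp : ∀ θ τ, p θ τ = c τ * ((sa τ).map (fun pr => π θ pr.1 pr.2)).prod)
    (hppos : ∀ τ, 0 < p θs τ)
    (hpsum : ∀ θ, ∑ τ, p θ τ = 1)
    (J : EuclideanSpace ℝ (Fin d) → ℝ) (hJ : J = fun θ => ∑ τ, p θ τ * R τ)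
    (Ψa : (S × A) → (S × A) → ℝ)
    (hΨa : ∀ pr' pr, Ψa pr' pr =
      -⟪gradient (fun θ => Real.log (π θ pr'.1 pr'.2)) θs,
         Hinv (gradient (ℓ pr.1 pr.2) θs)⟫)
    (Ψπ : ℝ)
    (hΨπ : Ψπ = -⟪gradient J θs,
      Hinv (gradient (fun θ => (1 / (H : ℝ)) * (ξ.map (fun pr => ℓ pr.1 pr.2 θ)).sum) θs)⟫) :
    Ψπ = ∑ τ, p θs τ *
      ((R τ / (H : ℝ)) * ((sa τ).map (fun pr' => (ξ.map (fun pr => Ψa pr' pr)).sum)).sum) := by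
  classical
  have hH0 : (H : ℝ) ≠ 0 := Nat.cast_ne_zero.mpr hHpos.ne'
  -- derivatives of ℓ
  have hℓdiff : ∀ pr : S × A, DifferentiableAt ℝ (ℓ pr.1 pr.2) θs := fun pr =>
    (hℓ pr.1 pr.2).differentiable two_ne_zero θs
  -- gradient of the demo loss F
  set F : EuclideanSpace ℝ (Fin d) → ℝ := fun θ => (1 / (H : ℝ)) * (ξ.map (fun pr => ℓ pr.1 pr.2 θ)).sum with hF
  have hFder : HasFDerivAt F
      ((1 / (H : ℝ)) • ((ξ.map (fun pr => fderiv ℝ (ℓ pr.1 pr.2) θs)).sum)) θs := by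
    exact (cupid_listsum_fderiv (fun pr : S × A => ℓ pr.1 pr.2) θs hℓdiff ξ).const_mul _
  have hgradF : gradient F θs
      = (1 / (H : ℝ)) • ((ξ.map (fun pr => gradient (ℓ pr.1 pr.2) θs)).sum) := by
    rw [gradient, hFder.fderiv, map_smul]
    congr 1
    rw [map_list_sum ((InnerProductSpace.toDual ℝ (EuclideanSpace ℝ (Fin d))).symm),
      List.map_map]
    rfl
  set G : EuclideanSpace ℝ (Fin d) := Hinv (gradient F θs) with hG
  have hSξ : Hinv ((ξ.map (fun pr => gradient (ℓ pr.1 pr.2) θs)).sum) = (H : ℝ) • G := by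
    rw [hG, hgradF, map_smul, smul_smul]
    rw [mul_one_div, div_self hH0, one_smul]
  -- pairing with gradients of log π
  have hlogpair : ∀ pr' : S × A, (ξ.map (fun pr => Ψa pr' pr)).sum
      = -((H : ℝ) * ((π θs pr'.1 pr'.2)⁻¹ * fderiv ℝ (fun θ => π θ pr'.1 pr'.2) θs G)) := by
    intro pr'
    have h1 : (ξ.map (fun pr => Ψa pr' pr)).sum
        = -⟪gradient (fun θ => Real.log (π θ pr'.1 pr'.2)) θs,
            Hinv ((ξ.map (fun pr => gradient (ℓ pr.1 pr.2) θs)).sum)⟫ := by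
      rw [← cupid_inner_list _ Hinv (fun pr : S × A => gradient (ℓ pr.1 pr.2) θs) ξ]
      exact congrArg List.sum (List.map_congr_left (fun pr _ => hΨa pr' pr))
    rw [h1, hSξ, real_inner_smul_right]
    congr 2
    have hlog : HasFDerivAt (fun θ => Real.log (π θ pr'.1 pr'.2))
        ((π θs pr'.1 pr'.2)⁻¹ • fderiv ℝ (fun θ => π θ pr'.1 pr'.2) θs) θs := by
      have := (Real.hasDerivAt_log (hπpos pr'.1 pr'.2).ne').comp_hasFDerivAt θs
        ((hπdiff pr'.1 pr'.2) θs).hasFDerivAt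
      exact this
    rw [cupid_inner_grad, hlog.fderiv]
    simp
  -- derivative of p τ
  have hπdiffAt : ∀ pr : S × A, DifferentiableAt ℝ (fun θ => π θ pr.1 pr.2) θs :=
    fun pr => (hπdiff pr.1 pr.2) θs
  have hπne : ∀ pr : S × A, π θs pr.1 pr.2 ≠ 0 := fun pr => (hπpos pr.1 pr.2).ne'
  have hpder : ∀ τ, HasFDerivAt (fun θ => p θ τ)
      ((c τ) • (((sa τ).map (fun i =>
        (((sa τ).map (fun j => π θs j.1 j.2)).prod * (π θs i.1 i.2)⁻¹) •
          fderiv ℝ (fun θ => π θ i.1 i.2) θs)).sum)) θs := by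
    intro τ
    have h := (cupid_listprod_fderiv (fun pr : S × A => fun θ => π θ pr.1 pr.2)
      θs hπdiffAt hπne (sa τ)).const_mul (c τ)
    have heq : (fun θ => c τ * ((sa τ).map (fun i => π θ i.1 i.2)).prod) = fun θ => p θ τ := by
      funext θ; exact (hp θ τ).symm
    rw [heq] at h
    exact h
  -- derivative of J
  have hJder : HasFDerivAt J (∑ τ, R τ • ((c τ) • (((sa τ).map (fun i =>
        (((sa τ).map (fun j => π θs j.1 j.2)).prod * (π θs i.1 i.2)⁻¹) •
          fderiv ℝ (fun θ => π θ i.1 i.2) θs)).sum))) θs := by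
    rw [hJ]
    exact HasFDerivAt.fun_sum (fun τ _ => (hpder τ).mul_const (R τ))
  -- main computation
  rw [hΨπ, cupid_inner_grad, hJder.fderiv]
  rw [ContinuousLinearMap.sum_apply, ← Finset.sum_neg_distrib]
  apply Finset.sum_congr rfl
  intro τ _
  simp only [ContinuousLinearMap.smul_apply, smul_eq_mul]
  rw [cupid_clm_apply]
  have hsum1 : ((sa τ).map (fun pr' => (ξ.map (fun pr => Ψa pr' pr)).sum)).sum
      = ((sa τ).map (fun pr' =>
          -((H : ℝ) * ((π θs pr'.1 pr'.2)⁻¹ *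
            fderiv ℝ (fun θ => π θ pr'.1 pr'.2) θs G)))).sum := by
    exact congrArg List.sum (List.map_congr_left (fun pr' _ => hlogpair pr'))
  rw [hsum1]
  rw [hp θs τ]
  rw [show ∀ x : ℝ, -(R τ * (c τ * x)) = (-(R τ) * c τ) * x from fun x => by ring]
  conv_rhs => rw [← List.sum_map_mul_left, ← List.sum_map_mul_left]
  conv_lhs => rw [← List.sum_map_mul_left]
  refine congrArg List.sum (List.map_congr_left ?_)
  intro i _
  simp only [ContinuousLinearMap.smul_apply, smul_eq_mul]
  have h1 := hπne i
  have h2 := hH0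
  field_simp
end

section
/- Under the same hypotheses as the performance-influence decomposition, but with demonstrations of variable lengths and the unweighted behavior-cloning loss L'_bc(θ) = ∑_{ξ∈D} ∑_{(s,a)∈ξ} ℓ(s,a;θ) and unweighted trajectory loss ℓ'_traj(ξ;θ) = ∑_{(s,a)∈ξ} ℓ(s,a;θ), the performance influence Ψ_π(ξ) = −∇J(θ*)^⊤ (∇²L'_bc(θ*))^{−1} ∇ℓ'_traj(ξ;θ*) satisfies Ψ_π(ξ) = E_{τ ∼ p_{θ*}} [ R(τ) ∑_{(s',a')∈τ} ∑_{(s,a)∈ξ} Ψ_a((s',a'),(s,a)) ], where Ψ_a uses the Hessian of L'_bc. -/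
open scoped RealInnerProductSpace

section Aux

variable {d : ℕ} {α : Type*}

private lemma inner_gradient_eq (f : EuclideanSpace ℝ (Fin d) → ℝ)
    (x v : EuclideanSpace ℝ (Fin d)) : ⟪gradient f x, v⟫ = fderiv ℝ f x v := by
  rw [gradient, InnerProductSpace.toDual_symm_apply]

private lemma list_sum_map_neg' (l : List α) (f : α → ℝ) :
    (l.map (fun a => -f a)).sum = -(l.map f).sum := by
  induction l with
  | nil => simp
  | cons a l ih => simp [ih, add_comm]

private lemma list_sum_clm_apply (l : List α)
    (F : α → (EuclideanSpace ℝ (Fin d) →L[ℝ] ℝ)) (v : EuclideanSpace ℝ (Fin d)) :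
    ((l.map F).sum) v = (l.map (fun a => F a v)).sum := by
  induction l with
  | nil => simp
  | cons a l ih => simp [ih, add_comm]

private lemma list_sum_hasFDerivAt (l : List α) (f : α → EuclideanSpace ℝ (Fin d) → ℝ)
    (x : EuclideanSpace ℝ (Fin d)) (hf : ∀ a, DifferentiableAt ℝ (f a) x) :
    HasFDerivAt (fun θ => (l.map (fun a => f a θ)).sum)
      ((l.map (fun a => fderiv ℝ (f a) x)).sum) x := by
  induction l with
  | nil => simpa using hasFDerivAt_const (0 : ℝ) x
  | cons a l ih => simpa using (hf a).hasFDerivAt.fun_add ih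

private lemma list_prod_hasFDerivAt (l : List α) (f : α → EuclideanSpace ℝ (Fin d) → ℝ)
    (x : EuclideanSpace ℝ (Fin d)) (hf : ∀ a, DifferentiableAt ℝ (f a) x)
    (hne : ∀ a, f a x ≠ 0) :
    HasFDerivAt (fun θ => (l.map (fun a => f a θ)).prod)
      (((l.map (fun a => f a x)).prod) •
        (l.map (fun a => fderiv ℝ (fun θ => Real.log (f a θ)) x)).sum) x := by
  induction l with
  | nil => simpa using hasFDerivAt_const (1 : ℝ) x
  | cons a l ih =>
    have hlog : HasFDerivAt (fun θ => Real.log (f a θ))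
        ((f a x)⁻¹ • fderiv ℝ (f a) x) x :=
      (Real.hasDerivAt_log (hne a)).comp_hasFDerivAt x (hf a).hasFDerivAt
    have hmul := (hf a).hasFDerivAt.mul ih
    set P : ℝ := (l.map (fun a => f a x)).prod with hP
    set Sg := (l.map (fun a => fderiv ℝ (fun θ => Real.log (f a θ)) x)).sum with hSg
    have hq : HasFDerivAt (fun θ => f a θ * (l.map (fun a => f a θ)).prod)
        ((f a x * P) • (fderiv ℝ (fun θ => Real.log (f a θ)) x + Sg)) x := by
      rw [hlog.fderiv, smul_add, smul_smul, mul_comm (f a x) P, mul_assoc,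
        mul_inv_cancel₀ (hne a), mul_one]
      have heq : P • fderiv ℝ (f a) x + (P * f a x) • Sg
          = f a x • P • Sg + P • fderiv ℝ (f a) x := by
        rw [smul_smul, mul_comm (f a x) P]; abel
      rw [heq]
      exact hmul
    simpa using hq

end Aux

/-- Variable-length extension of CUPID's performance-influence decomposition
(Proposition D.2): with the unweighted behavior-cloning loss
`L'_bc(θ) = ∑_{ξ∈D} ∑_{(s,a)∈ξ} ℓ(s,a;θ)` and unweighted trajectory loss, the
performance influence decomposes into the return-weighted double sum of action
influences, without the `1/H` normalization. -/
theorem stmt_8 {S A : Type} (d N : ℕ)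
    (demo : Fin N → List (S × A))
    (j₀ : Fin N) (ξ : List (S × A)) (hξ : ξ = demo j₀)
    (ℓ : S → A → EuclideanSpace ℝ (Fin d) → ℝ) (hℓ : ∀ s a, ContDiff ℝ 2 (ℓ s a))
    (θs : EuclideanSpace ℝ (Fin d))
    (Lbc : EuclideanSpace ℝ (Fin d) → ℝ)
    (hLbc : Lbc = fun θ => ∑ j, ((demo j).map (fun pr => ℓ pr.1 pr.2 θ)).sum)
    (hcrit : gradient Lbc θs = 0)
    (Hbc Hinv : EuclideanSpace ℝ (Fin d) →L[ℝ] EuclideanSpace ℝ (Fin d))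
    (hHbc : Hbc = fderiv ℝ (gradient Lbc) θs)
    (hpd : ∀ v, v ≠ 0 → 0 < ⟪v, Hbc v⟫)
    (hinv1 : Hinv.comp Hbc = ContinuousLinearMap.id ℝ (EuclideanSpace ℝ (Fin d)))
    (hinv2 : Hbc.comp Hinv = ContinuousLinearMap.id ℝ (EuclideanSpace ℝ (Fin d)))
    {T : Type} [Fintype T] (R : T → ℝ) (sa : T → List (S × A))
    (π : EuclideanSpace ℝ (Fin d) → S → A → ℝ)
    (hπpos : ∀ s a, 0 < π θs s a)
    (hπdiff : ∀ s a, Differentiable ℝ (fun θ => π θ s a))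
    (c : T → ℝ)
    (p : EuclideanSpace ℝ (Fin d) → T → ℝ)
    (hp : ∀ θ τ, p θ τ = c τ * ((sa τ).map (fun pr => π θ pr.1 pr.2)).prod)
    (hppos : ∀ τ, 0 < p θs τ)
    (hpsum : ∀ θ, ∑ τ, p θ τ = 1)
    (J : EuclideanSpace ℝ (Fin d) → ℝ) (hJ : J = fun θ => ∑ τ, p θ τ * R τ)
    (Ψa : (S × A) → (S × A) → ℝ)
    (hΨa : ∀ pr' pr, Ψa pr' pr =
      -⟪gradient (fun θ => Real.log (π θ pr'.1 pr'.2)) θs,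
         Hinv (gradient (ℓ pr.1 pr.2) θs)⟫)
    (Ψπ : ℝ)
    (hΨπ : Ψπ = -⟪gradient J θs,
      Hinv (gradient (fun θ => (ξ.map (fun pr => ℓ pr.1 pr.2 θ)).sum) θs)⟫) :
    Ψπ = ∑ τ, p θs τ *
      (R τ * ((sa τ).map (fun pr' => (ξ.map (fun pr => Ψa pr' pr)).sum)).sum) := by
  classical
  set g : EuclideanSpace ℝ (Fin d) :=
    gradient (fun θ => (ξ.map (fun pr => ℓ pr.1 pr.2 θ)).sum) θs with hg
  set u : EuclideanSpace ℝ (Fin d) := Hinv g with hu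
  have hℓdiff : ∀ (pr : S × A), DifferentiableAt ℝ (ℓ pr.1 pr.2) θs :=
    fun pr => ((hℓ pr.1 pr.2).differentiable (by norm_num)) θs
  have hgsum : g = (ξ.map (fun pr => gradient (ℓ pr.1 pr.2) θs)).sum := by
    rw [hg, gradient,
      (list_sum_hasFDerivAt ξ (fun pr => ℓ pr.1 pr.2) θs hℓdiff).fderiv,
      map_list_sum ((InnerProductSpace.toDual ℝ (EuclideanSpace ℝ (Fin d))).symm),
      List.map_map]
    rfl
  -- the log-policy differentials
  have hinner : ∀ pr' : S × A, (ξ.map (fun pr => Ψa pr' pr)).sum =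
      -(fderiv ℝ (fun θ => Real.log (π θ pr'.1 pr'.2)) θs u) := by
    intro pr'
    set F : EuclideanSpace ℝ (Fin d) →L[ℝ] ℝ :=
      (fderiv ℝ (fun θ => Real.log (π θ pr'.1 pr'.2)) θs).comp Hinv with hF
    have h1 : (ξ.map (fun pr => Ψa pr' pr)) =
        (ξ.map (fun pr => -(F (gradient (ℓ pr.1 pr.2) θs)))) := by
      refine List.map_congr_left (fun pr _ => ?_)
      rw [hΨa, inner_gradient_eq]
      rfl
    have h2 : F ((ξ.map (fun pr => gradient (ℓ pr.1 pr.2) θs)).sum)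
        = (ξ.map (fun pr => F (gradient (ℓ pr.1 pr.2) θs))).sum := by
      rw [map_list_sum F, List.map_map]
      rfl
    rw [h1, list_sum_map_neg', ← h2, hu, hgsum]
    rfl
  -- differentiability data for π
  have hπd : ∀ pr : S × A, DifferentiableAt ℝ (fun θ => π θ pr.1 pr.2) θs :=
    fun pr => (hπdiff pr.1 pr.2) θs
  have hπne : ∀ pr : S × A, π θs pr.1 pr.2 ≠ 0 := fun pr => (hπpos pr.1 pr.2).ne'
  -- derivative of p at θs
  have hpderiv : ∀ τ, HasFDerivAt (fun θ => p θ τ)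
      ((p θs τ) • ((sa τ).map
        (fun pr' => fderiv ℝ (fun θ => Real.log (π θ pr'.1 pr'.2)) θs)).sum) θs := by
    intro τ
    have heq : (fun θ => p θ τ)
        = fun θ => c τ * ((sa τ).map (fun pr => π θ pr.1 pr.2)).prod :=
      funext fun θ => hp θ τ
    rw [heq, hp θs τ]
    have h := (list_prod_hasFDerivAt (sa τ) (fun pr θ => π θ pr.1 pr.2) θs hπd hπne).const_mul (c τ)
    rw [smul_smul] at h
    exact h
  have hJd : HasFDerivAt J
      (∑ τ, (p θs τ * R τ) • ((sa τ).map
        (fun pr' => fderiv ℝ (fun θ => Real.log (π θ pr'.1 pr'.2)) θs)).sum) θs := by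
    rw [hJ]
    refine HasFDerivAt.fun_sum (fun τ _ => ?_)
    have h := (hpderiv τ).mul_const (R τ)
    rwa [smul_smul, mul_comm (R τ) (p θs τ)] at h
  have hgradJ : ⟪gradient J θs, u⟫ =
      ∑ τ, (p θs τ * R τ) *
        ((sa τ).map (fun pr' =>
          fderiv ℝ (fun θ => Real.log (π θ pr'.1 pr'.2)) θs u)).sum := by
    rw [inner_gradient_eq, hJd.fderiv, ContinuousLinearMap.sum_apply]
    refine Finset.sum_congr rfl (fun τ _ => ?_)
    rw [ContinuousLinearMap.smul_apply, list_sum_clm_apply]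
    rfl
  rw [hΨπ, hgradJ, ← Finset.sum_neg_distrib]
  refine Finset.sum_congr rfl (fun τ _ => ?_)
  rw [show ((sa τ).map (fun pr' => (ξ.map (fun pr => Ψa pr' pr)).sum))
      = ((sa τ).map (fun pr' =>
          -(fderiv ℝ (fun θ => Real.log (π θ pr'.1 pr'.2)) θs u))) from
    List.map_congr_left (fun pr' _ => hinner pr'),
    list_sum_map_neg']
  ring
end
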